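/- arXiv:2011.14171 — 2 statements merged into one kernel-verified Lean document; each statement's English description precedes it below -/
import Mathlib

section
/- Let X₁ have Gamma distribution with shape parameter 1 (exponential with rate 1, Laplace transform 1/(1+λ)), let θ have density π(x) = β x^{β-1} on [0,1] for β > 0, and suppose S ≥ 0 satisfies the distributional fixed-point equation S = X₁ + θ S' where X₁, θ, S' are independent and S' has the same law as S. Then the Laplace transform ψ(λ) = E[e^{-λS}] equals 1/(1+λ)^{1+β}; i.e., S has the Gamma distribution with shape parameter 1+β. -/
open MeasureTheory ProbabilityTheory

lemma aux_int (β : ℝ) (hβ : 0 < β) (l : ℝ) (hl : 0 ≤ l) :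
    ∫ x in Set.Ioo (0:ℝ) 1, β * x ^ (β-1) * (1 + l*x) ^ (-(1+β)) = (1+l) ^ (-β) := by
  have hpos : ∀ x : ℝ, 0 ≤ x → (0:ℝ) < 1 + l * x := by
    intro x hx; nlinarith
  set F : ℝ → ℝ := fun x => x ^ β * (1 + l*x) ^ (-β) with hF
  have hderiv : ∀ x ∈ Set.Ioo (0:ℝ) 1, HasDerivAt F (β * x ^ (β-1) * (1 + l*x) ^ (-(1+β))) x := by
    intro x hx
    obtain ⟨hx0, hx1⟩ := hx
    have hb : (0:ℝ) < 1 + l * x := hpos x hx0.le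
    have h1 : HasDerivAt (fun y : ℝ => y ^ β) (β * x ^ (β-1)) x :=
      Real.hasDerivAt_rpow_const (Or.inl hx0.ne')
    have h2 : HasDerivAt (fun y : ℝ => (1 + l*y) ^ (-β)) ((-β) * (1 + l*x) ^ (-β-1) * l) x := by
      have hinner : HasDerivAt (fun y : ℝ => 1 + l*y) l x := by
        simpa using ((hasDerivAt_id x).const_mul l).const_add 1
      have houter : HasDerivAt (fun z : ℝ => z ^ (-β)) ((-β) * (1 + l*x) ^ (-β-1)) (1 + l*x) :=
        Real.hasDerivAt_rpow_const (Or.inl hb.ne')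
      exact houter.comp x hinner
    have := h1.mul h2
    refine HasDerivAt.congr_deriv this ?_
    have e1 : x ^ β = x ^ (β-1) * x := by
      rw [← Real.rpow_add_one hx0.ne']; ring_nf
    have e2 : (1 + l*x) ^ (-β) = (1 + l*x) ^ (-(1+β)) * (1 + l*x) := by
      rw [← Real.rpow_add_one hb.ne']; ring_nf
    have e3 : (1 + l*x) ^ (-β-1) = (1 + l*x) ^ (-(1+β)) := by ring_nf
    rw [e3, e1, e2]; ring
  have hcont : ContinuousOn F (Set.Icc 0 1) := by
    intro x hx
    apply ContinuousWithinAt.mul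
    · exact (Real.continuousAt_rpow_const x β (Or.inr hβ.le)).continuousWithinAt
    · apply ContinuousAt.continuousWithinAt
      have hb : (0:ℝ) < 1 + l * x := hpos x hx.1
      exact ((by fun_prop : ContinuousAt (fun y : ℝ => 1 + l*y) x).rpow_const (Or.inl hb.ne'))
  have hint : IntervalIntegrable (fun x => β * x ^ (β-1) * (1 + l*x) ^ (-(1+β))) volume 0 1 := by
    have h1 : IntervalIntegrable (fun x : ℝ => x ^ (β-1)) volume 0 1 :=
      intervalIntegral.intervalIntegrable_rpow' (by linarith)
    have h2 : ContinuousOn (fun x : ℝ => β * (1 + l*x) ^ (-(1+β))) (Set.uIcc 0 1) := by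
      intro x hx
      rw [Set.uIcc_of_le (by norm_num : (0:ℝ) ≤ 1)] at hx
      have hb : (0:ℝ) < 1 + l * x := hpos x hx.1
      exact (continuousWithinAt_const.mul (ContinuousAt.continuousWithinAt
        ((by fun_prop : ContinuousAt (fun y : ℝ => 1 + l*y) x).rpow_const (Or.inl hb.ne'))))
    have h3 := h1.mul_continuousOn h2
    apply h3.congr
    intro x _
    ring
  have key := intervalIntegral.integral_eq_sub_of_hasDerivAt_of_le (by norm_num : (0:ℝ) ≤ 1)
    hcont hderiv hint
  have hF1 : F 1 = (1+l) ^ (-β) := by simp [hF]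
  have hF0 : F 0 = 0 := by
    simp [hF, Real.zero_rpow hβ.ne']
  rw [← MeasureTheory.integral_Ioc_eq_integral_Ioo, ← intervalIntegral.integral_of_le (by norm_num : (0:ℝ) ≤ 1)]
  rw [key, hF1, hF0, sub_zero]

/-- If S ≥ 0 satisfies the fixed point equation S = X + θS' with X, θ, S'
independent, X exponential(1) (Laplace transform 1/(1+λ)), θ with density
βx^{β-1} on (0,1), and S' distributed as S, then S has Laplace transform
(1+λ)^{-(1+β)}, i.e. S is Gamma(1+β). -/
theorem stmt_16 {Ω : Type*} [MeasureSpace Ω] [IsProbabilityMeasure (ℙ : Measure Ω)]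
    (β : ℝ) (hβ : 0 < β) (X θ S S' : Ω → ℝ)
    (hXm : Measurable X) (hθm : Measurable θ) (hSm : Measurable S)
    (hS'm : Measurable S')
    (hXnonneg : ∀ᵐ ω ∂ℙ, 0 ≤ X ω)
    (hXlaw : ∀ l : ℝ, 0 ≤ l → ∫ ω, Real.exp (-l * X ω) ∂ℙ = 1 / (1 + l))
    (hθlaw : Measure.map θ ℙ =
      (volume.restrict (Set.Ioo (0:ℝ) 1)).withDensity
        (fun x => ENNReal.ofReal (β * x ^ (β - 1))))
    (hindep : iIndepFun ![X, θ, S'] ℙ)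
    (hident : IdentDistrib S' S ℙ ℙ)
    (hSnonneg : ∀ᵐ ω ∂ℙ, 0 ≤ S ω)
    (hfix : ∀ᵐ ω ∂ℙ, S ω = X ω + θ ω * S' ω) :
    ∀ l : ℝ, 0 ≤ l → ∫ ω, Real.exp (-l * S ω) ∂ℙ = (1 + l) ^ (-(1 + β)) := by
  set ψ : ℝ → ℝ := fun l => ∫ ω, Real.exp (-l * S ω) ∂ℙ with hψdef
  have hexp_meas : ∀ c : ℝ, Measurable fun x : ℝ => Real.exp (-c * x) := by
    intro c; exact (measurable_id.const_mul (-c)).exp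
  -- density integrates to one
  have hone : ∫ x in Set.Ioo (0:ℝ) 1, β * x ^ (β-1) = 1 := by
    have := aux_int β hβ 0 le_rfl
    simpa using this
  -- basic facts about ψ
  have hψ0 : ψ 0 = 1 := by simp [hψdef]
  have hψle : ∀ y : ℝ, 0 ≤ y → |ψ y| ≤ 1 := by
    intro y hy
    have hb : ∀ᵐ ω ∂ℙ, ‖Real.exp (-y * S ω)‖ ≤ 1 := by
      filter_upwards [hSnonneg] with ω hω
      rw [Real.norm_eq_abs, abs_of_pos (Real.exp_pos _)]
      exact Real.exp_le_one_iff.mpr (by nlinarith)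
    calc |ψ y| = ‖∫ ω, Real.exp (-y * S ω) ∂ℙ‖ := rfl
      _ ≤ ∫ _ω, (1:ℝ) ∂ℙ := norm_integral_le_of_norm_le (integrable_const 1) hb
      _ = 1 := by simp
  -- ψ is the Laplace transform of S' too
  have hψS' : ∀ c : ℝ, ∫ ω, Real.exp (-c * S' ω) ∂ℙ = ψ c := by
    intro c
    exact (hident.comp (hexp_meas c)).integral_eq
  -- continuity of ψ on [0, ∞)
  have hψcont : ContinuousOn ψ (Set.Ici 0) := by
    intro l hl
    apply continuousWithinAt_of_dominated (bound := fun _ => (1:ℝ))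
    · exact Filter.Eventually.of_forall fun l' =>
        ((hexp_meas l').comp hSm).aestronglyMeasurable
    · filter_upwards [self_mem_nhdsWithin] with l' hl'
      filter_upwards [hSnonneg] with ω hω
      rw [Real.norm_eq_abs, abs_of_pos (Real.exp_pos _)]
      refine Real.exp_le_one_iff.mpr ?_
      have : (0:ℝ) ≤ l' := hl'
      nlinarith
    · exact integrable_const 1
    · exact Filter.Eventually.of_forall fun ω =>
        (Continuous.continuousWithinAt (by fun_prop))
  -- functional equation
  have hmeas3 : ∀ i, Measurable (![X, θ, S'] i) := by
    intro i; fin_cases i <;> simpa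
  have hpair_indep : IndepFun X (fun ω => (θ ω, S' ω)) ℙ := by
    have := hindep.indepFun_prodMk hmeas3 1 2 0 (by decide) (by decide)
    simpa using this.symm
  have hθS'indep : IndepFun θ S' ℙ := by
    have := hindep.indepFun (show (1:Fin 3) ≠ 2 by decide)
    simpa using this
  haveI hPθ : IsProbabilityMeasure (Measure.map θ ℙ) :=
    Measure.isProbabilityMeasure_map hθm.aemeasurable
  haveI hPS' : IsProbabilityMeasure (Measure.map S' ℙ) :=
    Measure.isProbabilityMeasure_map hS'm.aemeasurable
  have hmapprod : Measure.map (fun ω => (θ ω, S' ω)) ℙ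
      = (Measure.map θ ℙ).prod (Measure.map S' ℙ) :=
    (indepFun_iff_map_prod_eq_prod_map_map hθm.aemeasurable hS'm.aemeasurable).mp hθS'indep
  have hθae : ∀ᵐ t ∂(Measure.map θ ℙ), t ∈ Set.Ioo (0:ℝ) 1 := by
    rw [hθlaw]
    exact (withDensity_absolutelyContinuous _ _).ae_le (ae_restrict_mem measurableSet_Ioo)
  have hS'ae : ∀ᵐ s ∂(Measure.map S' ℙ), 0 ≤ s := by
    rw [hident.map_eq]
    exact (ae_map_iff hSm.aemeasurable measurableSet_Ici).mpr hSnonneg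
  have hfe : ∀ l : ℝ, 0 ≤ l →
      ψ l = (1/(1+l)) * ∫ x in Set.Ioo (0:ℝ) 1, β * x ^ (β-1) * ψ (l*x) := by
    intro l hl
    have hf2m : Measurable fun p : ℝ × ℝ => Real.exp (-l * (p.1 * p.2)) :=
      ((measurable_fst.mul measurable_snd).const_mul (-l)).exp
    -- step 1: split the integral using the fixed point equation
    have e1 : ψ l = ∫ ω, Real.exp (-l * X ω) * Real.exp (-l * (θ ω * S' ω)) ∂ℙ := by
      apply integral_congr_ae
      filter_upwards [hfix] with ω hω
      rw [hω, ← Real.exp_add]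
      congr 1
      ring
    -- step 2: independence splits the product
    have hiX : IndepFun (fun ω => Real.exp (-l * X ω))
        (fun ω => Real.exp (-l * (θ ω * S' ω))) ℙ :=
      hpair_indep.comp (hexp_meas l) hf2m
    have e2 : ∫ ω, Real.exp (-l * X ω) * Real.exp (-l * (θ ω * S' ω)) ∂ℙ
        = (∫ ω, Real.exp (-l * X ω) ∂ℙ) * ∫ ω, Real.exp (-l * (θ ω * S' ω)) ∂ℙ :=
      IndepFun.integral_mul_eq_mul_integral hiX ((hexp_meas l).comp hXm).aestronglyMeasurable
        (hf2m.comp (hθm.prodMk hS'm)).aestronglyMeasurable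
    -- step 3: compute the second factor through the product measure
    have hprodae : ∀ᵐ p ∂((Measure.map θ ℙ).prod (Measure.map S' ℙ)),
        p.1 ∈ Set.Ioo (0:ℝ) 1 ∧ 0 ≤ p.2 := by
      have hfst : ∀ᵐ p ∂((Measure.map θ ℙ).prod (Measure.map S' ℙ)),
          p.1 ∈ Set.Ioo (0:ℝ) 1 := by
        rw [ae_iff]
        have hset : {p : ℝ×ℝ | ¬ p.1 ∈ Set.Ioo (0:ℝ) 1}
            = (Set.Ioo (0:ℝ) 1)ᶜ ×ˢ (Set.univ : Set ℝ) := by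
          ext p; simp
        rw [hset, Measure.prod_prod]
        have h0 : (Measure.map θ ℙ) (Set.Ioo (0:ℝ) 1)ᶜ = 0 := ae_iff.mp hθae
        rw [h0, zero_mul]
      have hsnd : ∀ᵐ p ∂((Measure.map θ ℙ).prod (Measure.map S' ℙ)),
          0 ≤ p.2 := by
        rw [ae_iff]
        have hset : {p : ℝ×ℝ | ¬ 0 ≤ p.2}
            = (Set.univ : Set ℝ) ×ˢ {s : ℝ | ¬ 0 ≤ s} := by
          ext p; simp
        rw [hset, Measure.prod_prod]
        have h0 : (Measure.map S' ℙ) {s : ℝ | ¬ 0 ≤ s} = 0 := ae_iff.mp hS'ae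
        rw [h0, mul_zero]
      exact hfst.and hsnd
    have hJint : Integrable (fun p : ℝ × ℝ => Real.exp (-l * (p.1 * p.2)))
        ((Measure.map θ ℙ).prod (Measure.map S' ℙ)) := by
      apply Integrable.mono' (integrable_const (1:ℝ)) hf2m.aestronglyMeasurable
      filter_upwards [hprodae] with p hp
      rw [Real.norm_eq_abs, abs_of_pos (Real.exp_pos _)]
      refine Real.exp_le_one_iff.mpr ?_
      nlinarith [mul_nonneg (mul_nonneg hl hp.1.1.le) hp.2]
    have eJ1 : ∫ ω, Real.exp (-l * (θ ω * S' ω)) ∂ℙ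
        = ∫ p : ℝ × ℝ, Real.exp (-l * (p.1 * p.2))
            ∂((Measure.map θ ℙ).prod (Measure.map S' ℙ)) := by
      rw [← hmapprod,
        integral_map (hθm.prodMk hS'm).aemeasurable hf2m.aestronglyMeasurable]
    have eJ3 : ∀ t : ℝ, ∫ s, Real.exp (-l * (t * s)) ∂(Measure.map S' ℙ) = ψ (l*t) := by
      intro t
      have harg : (fun s : ℝ => Real.exp (-l * (t*s))) = fun s => Real.exp (-(l*t) * s) := by
        funext s; congr 1; ring
      rw [harg, integral_map hS'm.aemeasurable (hexp_meas (l*t)).aestronglyMeasurable]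
      exact hψS' (l*t)
    have eJ2 : ∫ p : ℝ × ℝ, Real.exp (-l * (p.1 * p.2))
          ∂((Measure.map θ ℙ).prod (Measure.map S' ℙ))
        = ∫ t, ψ (l*t) ∂(Measure.map θ ℙ) := by
      rw [integral_prod _ hJint]
      exact integral_congr_ae (Filter.Eventually.of_forall fun t => eJ3 t)
    -- step 4: integrate against the density of θ
    have hdm : Measurable fun x : ℝ => (β * x ^ (β-1)).toNNReal := by fun_prop
    have eJ4 : ∫ t, ψ (l*t) ∂(Measure.map θ ℙ)
        = ∫ x in Set.Ioo (0:ℝ) 1, β * x ^ (β-1) * ψ (l*x) := by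
      rw [hθlaw]
      have hcoe : (fun x : ℝ => ENNReal.ofReal (β * x ^ (β-1)))
          = fun x : ℝ => ((β * x ^ (β-1)).toNNReal : ENNReal) := rfl
      rw [hcoe, integral_withDensity_eq_integral_smul hdm]
      apply integral_congr_ae
      filter_upwards [ae_restrict_mem measurableSet_Ioo] with x hx
      have hx0 : (0:ℝ) < x := hx.1
      have hd : (0:ℝ) ≤ β * x ^ (β-1) := by positivity
      rw [NNReal.smul_def, smul_eq_mul, Real.coe_toNNReal _ hd]
    rw [e1, e2, hXlaw l hl, eJ1, eJ2, eJ4]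
  -- candidate satisfies the same equation (via aux_int)
  -- integrability of weighted integrands
  have hIntCore : IntegrableOn (fun x : ℝ => β * x ^ (β-1)) (Set.Ioo 0 1) volume := by
    have h1 : IntervalIntegrable (fun x : ℝ => x ^ (β-1)) volume 0 1 :=
      intervalIntegral.intervalIntegrable_rpow' (by linarith)
    have h2 := (intervalIntegrable_iff_integrableOn_Ioo_of_le (by norm_num : (0:ℝ) ≤ 1)).mp h1
    exact h2.const_mul β
  -- a.e.-measurability/integrability of weighted compositions
  have hIntComp : ∀ g : ℝ → ℝ, ContinuousOn g (Set.Ici 0) → (∀ y : ℝ, 0 ≤ y → |g y| ≤ 1) →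
      ∀ c : ℝ, 0 ≤ c →
      IntegrableOn (fun x : ℝ => β * x ^ (β-1) * g (c*x)) (Set.Ioo 0 1) volume := by
    intro g hgc hgb c hc
    have hmaps : Set.MapsTo (fun x : ℝ => c * x) (Set.Ioo 0 1) (Set.Ici 0) := by
      intro x hx; exact Set.mem_Ici.mpr (mul_nonneg hc hx.1.le)
    have hgm : AEStronglyMeasurable (fun x : ℝ => g (c*x)) (volume.restrict (Set.Ioo 0 1)) :=
      (hgc.comp ((continuous_const.mul continuous_id).continuousOn) hmaps).aestronglyMeasurable
        measurableSet_Ioo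
    apply Integrable.mono' hIntCore (hIntCore.aestronglyMeasurable.mul hgm)
    filter_upwards [ae_restrict_mem measurableSet_Ioo] with x hx
    have hx0 : (0:ℝ) < x := hx.1
    have hd : (0:ℝ) ≤ β * x ^ (β-1) := by positivity
    simp only [Pi.mul_apply]
    rw [Real.norm_eq_abs, abs_mul, abs_of_nonneg hd]
    have := hgb (c*x) (mul_nonneg hc hx0.le)
    nlinarith
  -- candidate
  set ψ₀ : ℝ → ℝ := fun y => (1+y) ^ (-(1+β)) with hψ₀def
  have hψ₀cont : ContinuousOn ψ₀ (Set.Ici 0) := by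
    intro y hy
    have hb : (0:ℝ) < 1 + y := by have : (0:ℝ) ≤ y := hy; linarith
    exact ContinuousAt.continuousWithinAt
      ((by fun_prop : ContinuousAt (fun z : ℝ => 1 + z) y).rpow_const (Or.inl hb.ne'))
  have hψ₀le : ∀ y : ℝ, 0 ≤ y → |ψ₀ y| ≤ 1 := by
    intro y hy
    have hb : (0:ℝ) < 1 + y := by linarith
    rw [hψ₀def, abs_of_pos (Real.rpow_pos_of_pos hb _)]
    exact Real.rpow_le_one_of_one_le_of_nonpos (by linarith) (by linarith)
  have hψ₀fe : ∀ y : ℝ, 0 ≤ y →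
      ψ₀ y = (1/(1+y)) * ∫ x in Set.Ioo (0:ℝ) 1, β * x ^ (β-1) * ψ₀ (y*x) := by
    intro y hy
    have hb : (0:ℝ) < 1 + y := by linarith
    have := aux_int β hβ y hy
    have heq : (fun x : ℝ => β * x ^ (β-1) * ψ₀ (y*x))
        = fun x : ℝ => β * x ^ (β-1) * (1 + y*x) ^ (-(1+β)) := rfl
    rw [heq, this]
    show (1+y) ^ (-(1+β)) = 1/(1+y) * (1+y) ^ (-β)
    rw [show -(1+β) = -1 + -β by ring, Real.rpow_add hb, Real.rpow_neg_one]
    ring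
  -- main uniqueness argument
  intro l hl
  show ψ l = ψ₀ l
  set h : ℝ → ℝ := fun y => |ψ y - ψ₀ y| with hhdef
  have hhcont : ContinuousOn h (Set.Icc 0 l) := by
    have : Set.Icc (0:ℝ) l ⊆ Set.Ici 0 := fun x hx => hx.1
    exact (((hψcont.mono this).sub (hψ₀cont.mono this)).abs)
  obtain ⟨m, hm, hmax⟩ := isCompact_Icc.exists_isMaxOn (Set.nonempty_Icc.mpr hl) hhcont
  have hh0 : h 0 = 0 := by
    simp [hhdef, hψ0, hψ₀def]
  have hhm : h m = 0 := by
    by_contra hne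
    have hpos : 0 < h m := lt_of_le_of_ne (abs_nonneg _) (Ne.symm hne)
    have hm0 : 0 < m := by
      rcases lt_or_eq_of_le hm.1 with hlt | heq
      · exact hlt
      · exact absurd (heq ▸ hh0) hne
    have hbm : (0:ℝ) < 1 + m := by linarith
    -- the key inequality
    have hkey : h m ≤ (1/(1+m)) * h m := by
      have e1 := hfe m hm.1
      have e2 := hψ₀fe m hm.1
      have hI1 := hIntComp ψ hψcont hψle m hm.1
      have hI0 := hIntComp ψ₀ hψ₀cont hψ₀le m hm.1
      have ediff : ψ m - ψ₀ m = (1/(1+m)) *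
          ∫ x in Set.Ioo (0:ℝ) 1, β * x ^ (β-1) * (ψ (m*x) - ψ₀ (m*x)) := by
        rw [e1, e2, ← mul_sub, ← integral_sub hI1 hI0]
        congr 1
        apply integral_congr_ae
        filter_upwards with x
        ring
      have hbound : |∫ x in Set.Ioo (0:ℝ) 1, β * x ^ (β-1) * (ψ (m*x) - ψ₀ (m*x))|
          ≤ ∫ x in Set.Ioo (0:ℝ) 1, β * x ^ (β-1) * h m := by
        rw [← Real.norm_eq_abs]
        apply norm_integral_le_of_norm_le (hIntCore.mul_const (h m))
        filter_upwards [ae_restrict_mem measurableSet_Ioo] with x hx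
        have hx0 : (0:ℝ) < x := hx.1
        have hd : (0:ℝ) ≤ β * x ^ (β-1) := by positivity
        rw [Real.norm_eq_abs, abs_mul, abs_of_nonneg hd]
        have hmem : m * x ∈ Set.Icc (0:ℝ) l := by
          constructor
          · exact mul_nonneg hm0.le hx0.le
          · calc m * x ≤ m * 1 := by nlinarith [hx.2]
              _ ≤ l := by simpa using hm.2
        have := hmax hmem
        have h1 : |ψ (m*x) - ψ₀ (m*x)| ≤ h m := this
        nlinarith
      have hsum : ∫ x in Set.Ioo (0:ℝ) 1, β * x ^ (β-1) * h m = h m := by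
        rw [integral_mul_const, hone, one_mul]
      calc h m = |ψ m - ψ₀ m| := rfl
        _ = (1/(1+m)) * |∫ x in Set.Ioo (0:ℝ) 1, β * x ^ (β-1) * (ψ (m*x) - ψ₀ (m*x))| := by
            rw [ediff, abs_mul, abs_of_pos (by positivity : (0:ℝ) < 1/(1+m))]
        _ ≤ (1/(1+m)) * (∫ x in Set.Ioo (0:ℝ) 1, β * x ^ (β-1) * h m) := by
            apply mul_le_mul_of_nonneg_left _ (by positivity)
            rw [hsum] at hbound ⊢
            exact hbound
        _ = (1/(1+m)) * h m := by rw [hsum]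
    have : h m * (1+m) ≤ h m := by
      have hne' : (1+m) ≠ 0 := hbm.ne'
      calc h m * (1+m) ≤ ((1/(1+m)) * h m) * (1+m) := by nlinarith
        _ = h m := by field_simp
    nlinarith
  have hl' : h l ≤ h m := hmax (Set.mem_Icc.mpr ⟨hl, le_rfl⟩)
  have : h l = 0 := le_antisymm (hhm ▸ hl') (abs_nonneg _)
  have := abs_eq_zero.mp this
  linarith
end

section
/- Suppose ψ : [0,∞) → (0,∞) is differentiable, Φ : [0,∞) → (0,∞) is continuous with Φ(0)=1, and ψ satisfies ψ(λ)λ^β / Φ(λ) = β ∫₀^λ ψ(y) y^{β-1} dy for all λ > 0, for some β > 0. Then ψ(λ) = Φ(λ) exp(-β ∫₀^λ (1-Φ(s))/s ds) for all λ ≥ 0. -/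
open MeasureTheory intervalIntegral

/-- ODE step: if ψ, Φ > 0 on [0,∞), ψ differentiable, Φ continuous with
Φ(0)=1, and ψ(λ)λ^β/Φ(λ) = β∫₀^λ ψ(y)y^{β-1}dy for λ > 0, then
ψ(λ) = Φ(λ)·exp(-β∫₀^λ (1-Φ(s))/s ds) for all λ ≥ 0. -/
theorem stmt_17 (ψ Φ : ℝ → ℝ) (β : ℝ) (hβ : 0 < β)
    (hψdiff : DifferentiableOn ℝ ψ (Set.Ici 0))
    (hΦcont : ContinuousOn Φ (Set.Ici 0))
    (hψpos : ∀ x ≥ (0:ℝ), 0 < ψ x) (hΦpos : ∀ x ≥ (0:ℝ), 0 < Φ x)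
    (hΦ0 : Φ 0 = 1) (hψ0 : ψ 0 = 1)
    (heq : ∀ l : ℝ, 0 < l →
      ψ l * l ^ β / Φ l = β * ∫ y in (0:ℝ)..l, ψ y * y ^ (β - 1)) :
    ∀ l : ℝ, 0 ≤ l →
      ψ l = Φ l * Real.exp (-β * ∫ s in (0:ℝ)..l, (1 - Φ s) / s) := by
  have hψcont : ContinuousOn ψ (Set.Ici 0) := hψdiff.continuousOn
  intro l hl
  rcases eq_or_lt_of_le hl with rfl | hl0
  · simp [hψ0, hΦ0]
  set F : ℝ → ℝ := fun t => β * ∫ y in (0:ℝ)..t, ψ y * y ^ (β - 1) with hF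
  have hβ1 : (-1 : ℝ) < β - 1 := by linarith
  -- integrability of the integrand
  have hint : ∀ t : ℝ, 0 ≤ t →
      IntervalIntegrable (fun y => ψ y * y ^ (β - 1)) volume 0 t := by
    intro t ht
    exact (intervalIntegrable_rpow' hβ1).continuousOn_mul
      (hψcont.mono (by rw [Set.uIcc_of_le ht]; exact fun x hx => hx.1))
  -- positivity of F
  have hFpos : ∀ t : ℝ, 0 < t → 0 < F t := by
    intro t ht
    refine mul_pos hβ ?_
    refine intervalIntegral_pos_of_pos_on (hint t ht.le) (fun x hx => ?_) ht
    exact mul_pos (hψpos x hx.1.le) (Real.rpow_pos_of_pos hx.1 _)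
  -- formula for Φ
  have hΦeq : ∀ t : ℝ, 0 < t → Φ t = ψ t * t ^ β / F t := by
    intro t ht
    have h := heq t ht
    have hΦt := (hΦpos t ht.le).ne'
    have hFt := (hFpos t ht).ne'
    rw [hF] at hFt ⊢
    field_simp at h ⊢
    have hI : (∫ y in (0:ℝ)..t, ψ y * y ^ (β - 1)) ≠ 0 := fun h0 => hFt (by simp [h0])
    rw [h, mul_div_assoc, div_self hI, mul_one]
  -- derivative of F
  have hFderiv : ∀ t : ℝ, 0 < t → HasDerivAt F (β * (ψ t * t ^ (β - 1))) t := by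
    intro t ht
    have hcontI : ContinuousOn (fun y => ψ y * y ^ (β - 1)) (Set.Ioi 0) := by
      refine (hψcont.mono Set.Ioi_subset_Ici_self).mul ?_
      intro x hx
      exact (Real.continuousAt_rpow_const x _ (Or.inl (ne_of_gt hx))).continuousWithinAt
    have h1 : HasDerivAt (fun u => ∫ y in (0:ℝ)..u, ψ y * y ^ (β - 1))
        (ψ t * t ^ (β - 1)) t := by
      refine intervalIntegral.integral_hasDerivAt_right (hint t ht.le) ?_ ?_
      · exact ⟨Set.Ioi 0, Ioi_mem_nhds ht,
          (hcontI.mono (le_refl _)).aestronglyMeasurable measurableSet_Ioi⟩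
      · exact hcontI.continuousAt (Ioi_mem_nhds ht)
    exact h1.const_mul β
  -- the log-quotient function
  set L : ℝ → ℝ := fun t => Real.log (ψ t) - Real.log (Φ t) with hLdef
  have hL0 : L 0 = 0 := by simp [hLdef, hψ0, hΦ0]
  have hLcont : ContinuousOn L (Set.Icc 0 l) := by
    refine ContinuousOn.sub ?_ ?_
    · exact ((hψcont.mono (fun x hx => hx.1)).log
        (fun x hx => (hψpos x hx.1).ne'))
    · exact ((hΦcont.mono (fun x hx => hx.1)).log
        (fun x hx => (hΦpos x hx.1).ne'))
  have hLderiv : ∀ x ∈ Set.Ioo 0 l, HasDerivAt L (-β * ((1 - Φ x) / x)) x := by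
    intro x hx
    have hx0 := hx.1
    have hFx := hFpos x hx0
    have hψx := hψpos x hx0.le
    have hev : (fun t => Real.log (F t) - β * Real.log t) =ᶠ[nhds x] L := by
      filter_upwards [Ioi_mem_nhds hx0] with t ht
      have hψt := hψpos t (le_of_lt ht)
      have hFt := hFpos t ht
      have hrt : (0:ℝ) < t ^ β := Real.rpow_pos_of_pos ht β
      rw [hLdef]
      simp only
      rw [hΦeq t ht, Real.log_div (by positivity) hFt.ne',
        Real.log_mul hψt.ne' hrt.ne', Real.log_rpow ht]
      ring
    have h2 : HasDerivAt (fun t => Real.log (F t) - β * Real.log t)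
        (β * (ψ x * x ^ (β - 1)) / F x - β * x⁻¹) x := by
      refine HasDerivAt.sub ?_ ?_
      · exact (hFderiv x hx0).log hFx.ne'
      · simpa using (Real.hasDerivAt_log hx0.ne').const_mul β
    have h3 := h2.congr_of_eventuallyEq hev.symm
    refine h3.congr_deriv (Eq.symm ?_)
    have hxb : x ^ (β - 1) = x ^ β * x⁻¹ := by
      rw [Real.rpow_sub hx0, Real.rpow_one, div_eq_mul_inv]
    rw [hΦeq x hx0, hxb]
    field_simp
    ring
  -- boundedness of the integrand near 0
  obtain ⟨C, hCpos, δ, hδpos, hC⟩ :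
      ∃ C, 0 < C ∧ ∃ δ, 0 < δ ∧ ∀ y ∈ Set.Icc (0:ℝ) δ, |ψ y - 1| ≤ C * y := by
    have hd := (hψdiff 0 Set.self_mem_Ici).hasDerivWithinAt
    set a := derivWithin ψ (Set.Ici 0) 0 with ha
    have hlo := (hasDerivWithinAt_iff_isLittleO.mp hd).def one_pos
    rw [eventually_nhdsWithin_iff, Metric.eventually_nhds_iff] at hlo
    obtain ⟨ε, hε, hball⟩ := hlo
    refine ⟨|a| + 1, by positivity, ε / 2, by positivity, fun y hy => ?_⟩
    have h1 : dist y (0:ℝ) < ε := by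
      rw [Real.dist_eq, sub_zero, abs_of_nonneg hy.1]; linarith [hy.2]
    have h2 := hball h1 (Set.mem_Ici.2 hy.1)
    simp only [hψ0, sub_zero, smul_eq_mul, Real.norm_eq_abs, one_mul] at h2
    have h3 : |ψ y - 1| ≤ |y * a| + |y| := by
      have := abs_add_le (ψ y - 1 - y * a) (y * a)
      simpa using le_trans this (by linarith [h2] : |ψ y - 1 - y * a| + |y * a| ≤ |y * a| + |y|)
    rw [abs_mul, abs_of_nonneg hy.1] at h3
    nlinarith [abs_nonneg a, hy.1]
  -- minimum of ψ on [0, l]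
  obtain ⟨z, hz, hminz⟩ := (isCompact_Icc (a := (0:ℝ)) (b := l)).exists_isMinOn
    (Set.nonempty_Icc.2 hl) (hψcont.mono (fun x hx => hx.1))
  set m : ℝ := ψ z with hm
  have hmpos : 0 < m := hψpos z hz.1
  -- lower bound for F
  have hrval : ∀ t : ℝ, 0 < t → ∫ y in (0:ℝ)..t, y ^ (β - 1) = t ^ β / β := by
    intro t ht
    rw [integral_rpow (Or.inl hβ1)]
    have hb : β - 1 + 1 = β := by ring
    rw [hb, Real.zero_rpow hβ.ne', sub_zero]
  have hFlow : ∀ t ∈ Set.Ioc (0:ℝ) l, m * t ^ β ≤ F t := by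
    intro t ht
    have hrint : IntervalIntegrable (fun y : ℝ => m * y ^ (β - 1)) volume 0 t :=
      (intervalIntegrable_rpow' hβ1).const_mul m
    have hmono : (∫ y in (0:ℝ)..t, m * y ^ (β - 1))
        ≤ ∫ y in (0:ℝ)..t, ψ y * y ^ (β - 1) := by
      refine integral_mono_on ht.1.le hrint (hint t ht.1.le) (fun y hy => ?_)
      exact mul_le_mul_of_nonneg_right
        (isMinOn_iff.mp hminz y ⟨hy.1, le_trans hy.2 ht.2⟩) (Real.rpow_nonneg hy.1 _)
    rw [intervalIntegral.integral_const_mul, hrval t ht.1] at hmono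
    have := mul_le_mul_of_nonneg_left hmono hβ.le
    rw [hF]
    simp only
    calc m * t ^ β = β * (m * (t ^ β / β)) := by field_simp
      _ ≤ β * ∫ y in (0:ℝ)..t, ψ y * y ^ (β - 1) := this
  -- bound for the integrand near 0
  set δ' : ℝ := min δ l with hδ'
  have hδ'pos : 0 < δ' := lt_min hδpos hl0
  have hboundsmall : ∀ t ∈ Set.Ioc (0:ℝ) δ', |(1 - Φ t) / t| ≤ 2 * C / m := by
    intro t ht
    have ht0 : 0 < t := ht.1
    have htl : t ≤ l := le_trans ht.2 (min_le_right δ l)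
    have htδ : t ≤ δ := le_trans ht.2 (min_le_left δ l)
    have hrpos : (0:ℝ) < t ^ β := Real.rpow_pos_of_pos ht0 β
    have hptw : ∀ y ∈ Set.Icc (0:ℝ) t, |ψ y - ψ t| ≤ 2 * C * t := by
      intro y hy
      have h1 := hC y ⟨hy.1, le_trans hy.2 htδ⟩
      have h2 := hC t ⟨ht0.le, htδ⟩
      have h3 : |ψ y - ψ t| ≤ |ψ y - 1| + |ψ t - 1| := by
        have := abs_sub (ψ y - 1) (ψ t - 1)
        simpa using this
      nlinarith [hy.2, hCpos.le]
    have hrpowint : IntervalIntegrable (fun y : ℝ => y ^ (β - 1)) volume 0 t :=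
      intervalIntegrable_rpow' hβ1
    have e1 : (∫ y in (0:ℝ)..t, (ψ y - ψ t) * y ^ (β - 1))
        = (∫ y in (0:ℝ)..t, ψ y * y ^ (β - 1))
          - ψ t * ∫ y in (0:ℝ)..t, y ^ (β - 1) := by
      rw [← intervalIntegral.integral_const_mul,
        ← intervalIntegral.integral_sub (hint t ht0.le) (hrpowint.const_mul (ψ t))]
      congr 1
      ext y
      ring
    have hFt : F t - ψ t * t ^ β
        = β * ∫ y in (0:ℝ)..t, (ψ y - ψ t) * y ^ (β - 1) := by
      rw [e1, hrval t ht0, hF]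
      simp only
      field_simp
    have hcont2 : ContinuousOn (fun y => ψ y - ψ t) (Set.uIcc (0:ℝ) t) := by
      refine ContinuousOn.sub (hψcont.mono ?_) continuousOn_const
      rw [Set.uIcc_of_le ht0.le]
      exact fun x hx => hx.1
    have hint2 : IntervalIntegrable (fun y => (ψ y - ψ t) * y ^ (β - 1)) volume 0 t :=
      (intervalIntegrable_rpow' hβ1).continuousOn_mul hcont2
    have habs : |∫ y in (0:ℝ)..t, (ψ y - ψ t) * y ^ (β - 1)|
        ≤ 2 * C * t * (t ^ β / β) := by
      calc |∫ y in (0:ℝ)..t, (ψ y - ψ t) * y ^ (β - 1)|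
          ≤ ∫ y in (0:ℝ)..t, |(ψ y - ψ t) * y ^ (β - 1)| :=
            abs_integral_le_integral_abs ht0.le
        _ ≤ ∫ y in (0:ℝ)..t, (2 * C * t) * y ^ (β - 1) := by
            refine integral_mono_on ht0.le hint2.abs (hrpowint.const_mul _)
              (fun y hy => ?_)
            rw [abs_mul, abs_of_nonneg (Real.rpow_nonneg hy.1 _)]
            exact mul_le_mul_of_nonneg_right (hptw y hy) (Real.rpow_nonneg hy.1 _)
        _ = 2 * C * t * (t ^ β / β) := by
            rw [intervalIntegral.integral_const_mul, hrval t ht0]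
    have hFbound : |F t - ψ t * t ^ β| ≤ 2 * C * t * t ^ β := by
      rw [hFt, abs_mul, abs_of_pos hβ]
      calc β * |∫ y in (0:ℝ)..t, (ψ y - ψ t) * y ^ (β - 1)|
          ≤ β * (2 * C * t * (t ^ β / β)) := mul_le_mul_of_nonneg_left habs hβ.le
        _ = 2 * C * t * t ^ β := by field_simp
    have hFtpos := hFpos t ht0
    have hFlowt := hFlow t ⟨ht0, htl⟩
    have h1Φ : 1 - Φ t = (F t - ψ t * t ^ β) / F t := by
      rw [hΦeq t ht0]
      field_simp
    rw [abs_div, h1Φ, abs_div, abs_of_pos hFtpos, abs_of_pos ht0, div_div]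
    calc |F t - ψ t * t ^ β| / (F t * t)
        ≤ (2 * C * t * t ^ β) / (m * t ^ β * t) := by
          refine div_le_div₀ (by positivity) hFbound (by positivity) ?_
          exact mul_le_mul_of_nonneg_right hFlowt ht0.le
      _ = 2 * C / m := by
          field_simp
  -- bound away from 0
  obtain ⟨B2, hB2⟩ := (isCompact_Icc (a := δ') (b := l)).exists_bound_of_continuousOn
    (f := fun s => (1 - Φ s) / s) (by
      refine ContinuousOn.div (continuousOn_const.sub (hΦcont.mono ?_)) continuousOn_id ?_
      · exact fun x hx => le_trans hδ'pos.le hx.1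
      · exact fun x hx => ne_of_gt (lt_of_lt_of_le hδ'pos hx.1))
  set B : ℝ := max (2 * C / m) B2 with hB
  have hbound : ∀ t ∈ Set.Ioc (0:ℝ) l, |(1 - Φ t) / t| ≤ B := by
    intro t ht
    rcases le_or_gt t δ' with h | h
    · exact le_trans (hboundsmall t ⟨ht.1, h⟩) (le_max_left _ _)
    · exact le_trans (hB2 t ⟨h.le, ht.2⟩) (le_max_right _ _)
  -- integrability of the integrand
  have hmeasιoc : ContinuousOn (fun s => (1 - Φ s) / s) (Set.Ioc 0 l) := by
    refine ContinuousOn.div (continuousOn_const.sub (hΦcont.mono ?_)) continuousOn_id ?_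
    · exact fun x hx => hx.1.le
    · exact fun x hx => ne_of_gt hx.1
  have hintH : IntervalIntegrable (fun s => (1 - Φ s) / s) volume 0 l := by
    rw [intervalIntegrable_iff_integrableOn_Ioc_of_le hl]
    refine ⟨hmeasιoc.aestronglyMeasurable measurableSet_Ioc, ?_⟩
    refine HasFiniteIntegral.of_bounded (C := B) ?_
    exact (ae_restrict_iff' measurableSet_Ioc).2 (ae_of_all _ (fun t ht => by
      rw [Real.norm_eq_abs]; exact hbound t ht))
  -- FTC
  have key : ∫ s in (0:ℝ)..l, -β * ((1 - Φ s) / s) = L l - L 0 :=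
    integral_eq_sub_of_hasDerivAt_of_le hl hLcont hLderiv (hintH.const_mul (-β))
  rw [intervalIntegral.integral_const_mul, hL0, sub_zero] at key
  rw [key]
  rw [hLdef]
  simp only
  rw [Real.exp_sub, Real.exp_log (hψpos l hl), Real.exp_log (hΦpos l hl),
    mul_div_assoc', mul_comm, mul_div_assoc, div_self (hΦpos l hl).ne', mul_one]
end
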